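/- Let G be a graph with a perfect matching M. An edge subset S ⊆ E(G)\M is an anti-forcing set of M if and only if S contains at least one edge of every M-alternating cycle of G. -/

import Mathlib

open SimpleGraph

variable {V : Type*}

/-- `M` is a perfect matching of `G`, viewed as a set of edges. -/
def IsPM (G : SimpleGraph V) (M : Set (Sym2 V)) : Prop :=
  M ⊆ G.edgeSet ∧ ∀ v : V, ∃! e, e ∈ M ∧ v ∈ e

/-- `G` has a perfect matching. -/
def HasPM (G : SimpleGraph V) : Prop := ∃ M, IsPM G M

/-- `c` is an `M`-alternating cycle of `G`: a cycle in which every vertex of the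
cycle lies on exactly one edge of the cycle belonging to `M`. -/
def IsAltCycle (G : SimpleGraph V) (M : Set (Sym2 V)) {v : V} (c : G.Walk v v) : Prop :=
  c.IsCycle ∧ ∀ w ∈ c.support, ∃! e, e ∈ c.edges ∧ e ∈ M ∧ w ∈ e

/-- `S` is a forcing set of the perfect matching `M` of `G`. -/
def IsForcingSet (G : SimpleGraph V) (M S : Set (Sym2 V)) : Prop :=
  S ⊆ M ∧ ∀ M', IsPM G M' → S ⊆ M' → M' = M

/-- `S ⊆ E(G) \ M` is an anti-forcing set of `M`: `G - S` has a unique perfect matching. -/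
def IsAntiForcingSet (G : SimpleGraph V) (M S : Set (Sym2 V)) : Prop :=
  S ⊆ G.edgeSet \ M ∧ ∃! M', IsPM (G.deleteEdges S) M'

/-- `S` is a global forcing set of `G`. -/
def IsGFS (G : SimpleGraph V) (S : Set (Sym2 V)) : Prop :=
  S ⊆ G.edgeSet ∧ ∀ M M', IsPM G M → IsPM G M' → M ∩ S = M' ∩ S → M = M'

/-- `G` has a perfect matching avoiding the vertex set `A`, i.e. `G - A` has a p.m. -/
def PMAvoiding (G : SimpleGraph V) (A : Set V) : Prop :=
  ∃ M, M ⊆ G.edgeSet ∧ (∀ e ∈ M, ∀ v, v ∈ e → v ∉ A) ∧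
    ∀ v, v ∉ A → ∃! e, e ∈ M ∧ v ∈ e

/-- `c` is a nice cycle of `G`: `G - V(c)` has a perfect matching. -/
def IsNiceCycle (G : SimpleGraph V) {v : V} (c : G.Walk v v) : Prop :=
  c.IsCycle ∧ PMAvoiding G {w | w ∈ c.support}

/-- The global forcing number. -/
noncomputable def gf (G : SimpleGraph V) : ℕ :=
  sInf {k | ∃ S, IsGFS G S ∧ S.ncard = k}

/-- The anti-forcing number of a perfect matching `M`. -/
noncomputable def af (G : SimpleGraph V) (M : Set (Sym2 V)) : ℕ :=
  sInf {k | ∃ S, IsAntiForcingSet G M S ∧ S.ncard = k}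

/-- The maximum anti-forcing number. -/
noncomputable def Af (G : SimpleGraph V) : ℕ :=
  sSup {k | ∃ M, IsPM G M ∧ af G M = k}

/-- The forcing number of a perfect matching `M`. -/
noncomputable def fnum (G : SimpleGraph V) (M : Set (Sym2 V)) : ℕ :=
  sInf {k | ∃ S, IsForcingSet G M S ∧ S.ncard = k}

/-- The maximum forcing number. -/
noncomputable def Fnum (G : SimpleGraph V) : ℕ :=
  sSup {k | ∃ M, IsPM G M ∧ fnum G M = k}

lemma mem_support_of_mem_edges' {G : SimpleGraph V} {u v w : V} {p : G.Walk u v}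
    {e : Sym2 V} (he : e ∈ p.edges) (hw : w ∈ e) : w ∈ p.support := by
  induction e with
  | _ x y =>
    rcases Sym2.mem_iff.mp hw with rfl | rfl
    · exact p.fst_mem_support_of_mem_edges he
    · exact p.snd_mem_support_of_mem_edges he

lemma exists_partner {H : SimpleGraph V} {N : Set (Sym2 V)} (h : IsPM H N) :
    ∃ f : V → V, (∀ u, s(u, f u) ∈ N) ∧ (∀ u, f u ≠ u) ∧ (∀ u, f (f u) = u) ∧
      (∀ e ∈ N, ∀ u, u ∈ e → e = s(u, f u)) := by
  have key : ∀ u : V, ∃ w : V, s(u, w) ∈ N ∧ w ≠ u ∧ ∀ e ∈ N, u ∈ e → e = s(u, w) := by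
    intro u
    obtain ⟨e, ⟨heN, heu⟩, huniq⟩ := h.2 u
    refine ⟨Sym2.Mem.other heu, ?_, ?_, ?_⟩
    · rwa [Sym2.other_spec heu]
    · intro hw
      have hd : e.IsDiag := by
        rw [← Sym2.other_spec heu, hw]; exact Sym2.mk_isDiag_iff.mpr rfl
      exact (H.not_isDiag_of_mem_edgeSet (h.1 heN)) hd
    · intro e' he' hue'
      rw [huniq e' ⟨he', hue'⟩]; exact (Sym2.other_spec heu).symm
  choose f hf1 hf2 hf3 using key
  refine ⟨f, hf1, hf2, ?_, ?_⟩
  · intro u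
    have h2 := hf3 (f u) s(u, f u) (hf1 u) (Sym2.mem_mk_right u (f u))
    rw [Sym2.eq, Sym2.rel_iff', Prod.mk.injEq, Prod.swap_prod_mk, Prod.mk.injEq] at h2
    rcases h2 with ⟨h2, h3⟩ | ⟨h2, _⟩
    · exact absurd h2.symm (hf2 u)
    · exact h2.symm
  · intro e he u hue
    exact hf3 u e he hue

lemma path_edge_at_start {G : SimpleGraph V} {a b : V} {p : G.Walk a b} (hp : p.IsPath)
    {e : Sym2 V} (he : e ∈ p.edges) (ha : a ∈ e) : e = s(a, p.getVert 1) := by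
  cases p with
  | nil => simp at he
  | cons h q =>
    rw [SimpleGraph.Walk.edges_cons, List.mem_cons] at he
    rcases he with rfl | he
    · rw [SimpleGraph.Walk.getVert_cons_succ, SimpleGraph.Walk.getVert_zero]
    · exfalso
      have := SimpleGraph.Walk.cons_isPath_iff h q |>.mp hp
      exact this.2 (mem_support_of_mem_edges' he ha)

lemma firstEdge_mem {G : SimpleGraph V} {a b : V} (p : G.Walk a b) (hp : 0 < p.length) :
    s(a, p.getVert 1) ∈ p.edges := by
  cases p with
  | nil => simp at hp
  | cons h q =>
    rw [SimpleGraph.Walk.getVert_cons_succ, SimpleGraph.Walk.getVert_zero, SimpleGraph.Walk.edges_cons]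
    exact List.mem_cons_self

lemma cycle_two_edges {G : SimpleGraph V} {v w : V} {c : G.Walk v v} (hc : c.IsCycle)
    (hw : w ∈ c.support) :
    ∃ e₁ e₂ : Sym2 V, e₁ ≠ e₂ ∧ e₁ ∈ c.edges ∧ e₂ ∈ c.edges ∧ w ∈ e₁ ∧ w ∈ e₂ ∧
      ∀ e ∈ c.edges, w ∈ e → e = e₁ ∨ e = e₂ := by
  haveI := Classical.decEq V
  have hmem : ∀ e : Sym2 V, e ∈ (c.rotate w hw).edges ↔ e ∈ c.edges := by
    intro e
    exact (c.rotate_edges w hw).perm.mem_iff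
  suffices h : ∃ e₁ e₂ : Sym2 V, e₁ ≠ e₂ ∧ e₁ ∈ (c.rotate w hw).edges ∧ e₂ ∈ (c.rotate w hw).edges ∧
      w ∈ e₁ ∧ w ∈ e₂ ∧ ∀ e ∈ (c.rotate w hw).edges, w ∈ e → e = e₁ ∨ e = e₂ by
    obtain ⟨e₁, e₂, hne, h1, h2, hw1, hw2, huniq⟩ := h
    exact ⟨e₁, e₂, hne, (hmem e₁).mp h1, (hmem e₂).mp h2, hw1, hw2,
      fun e he hwe => huniq e ((hmem e).mpr he) hwe⟩
  have hd : (c.rotate w hw).IsCycle := hc.rotate hw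
  have hlen : 3 ≤ (c.rotate w hw).length := hd.three_le_length
  set d := c.rotate w hw with hd_def
  clear_value d
  clear hd_def hmem hc
  cases d with
  | nil => simp at hlen
  | @cons _ x _ h q =>
    have hcyc := (SimpleGraph.Walk.cons_isCycle_iff q h).mp hd
    have hqpath : q.IsPath := hcyc.1
    have hqlen : 0 < q.length := by
      simp only [SimpleGraph.Walk.length_cons] at hlen; omega
    have hrlen : 0 < q.reverse.length := by rwa [SimpleGraph.Walk.length_reverse]
    refine ⟨s(w, x), s(w, q.reverse.getVert 1), ?_, ?_, ?_, ?_, ?_, ?_⟩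
    · intro heq
      apply hcyc.2
      rw [heq]
      have := firstEdge_mem q.reverse hrlen
      rwa [SimpleGraph.Walk.edges_reverse, List.mem_reverse] at this
    · rw [SimpleGraph.Walk.edges_cons]; exact List.mem_cons_self
    · rw [SimpleGraph.Walk.edges_cons]
      refine List.mem_cons_of_mem _ ?_
      have := firstEdge_mem q.reverse hrlen
      rwa [SimpleGraph.Walk.edges_reverse, List.mem_reverse] at this
    · exact Sym2.mem_mk_left _ _
    · exact Sym2.mem_mk_left _ _
    · intro e he hwe
      rw [SimpleGraph.Walk.edges_cons, List.mem_cons] at he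
      rcases he with rfl | he
      · left; rfl
      · right
        apply path_edge_at_start hqpath.reverse _ hwe
        rwa [SimpleGraph.Walk.edges_reverse, List.mem_reverse]

def walkFn (G : SimpleGraph V) (x : ℕ → V) :
    ∀ n : ℕ, (∀ i < n, G.Adj (x i) (x (i+1))) → G.Walk (x 0) (x n)
  | 0, _ => SimpleGraph.Walk.nil
  | (n+1), h => (walkFn G x n (fun i hi => h i (by omega))).concat (h n (by omega))

lemma walkFn_support (G : SimpleGraph V) (x : ℕ → V) (n : ℕ)
    (h : ∀ i < n, G.Adj (x i) (x (i+1))) :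
    (walkFn G x n h).support = (List.range (n+1)).map x := by
  induction n with
  | zero => simp [walkFn, List.range_succ]
  | succ n ih =>
    rw [walkFn, SimpleGraph.Walk.support_concat, ih, List.range_succ (n := n+1)]
    simp
lemma walkFn_edges (G : SimpleGraph V) (x : ℕ → V) (n : ℕ)
    (h : ∀ i < n, G.Adj (x i) (x (i+1))) :
    (walkFn G x n h).edges = (List.range n).map (fun i => s(x i, x (i+1))) := by
  induction n with
  | zero => simp [walkFn, List.range_succ]
  | succ n ih =>
    rw [walkFn, SimpleGraph.Walk.edges_concat, ih, List.range_succ (n := n)]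
    simp
lemma walkFn_length (G : SimpleGraph V) (x : ℕ → V) (n : ℕ)
    (h : ∀ i < n, G.Adj (x i) (x (i+1))) :
    (walkFn G x n h).length = n := by
  induction n with
  | zero => rfl
  | succ n ih => rw [walkFn, SimpleGraph.Walk.length_concat, ih]

lemma alt_cycle_of_two_matchings {G : SimpleGraph V} [Fintype V] {M N : Set (Sym2 V)}
    (f g : V → V)
    (hf1 : ∀ u, s(u, f u) ∈ M) (hfne : ∀ u, f u ≠ u) (hfinv : ∀ u, f (f u) = u)
    (hf4 : ∀ e ∈ M, ∀ u, u ∈ e → e = s(u, f u))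
    (hg1 : ∀ u, s(u, g u) ∈ N) (hgne : ∀ u, g u ≠ u) (hginv : ∀ u, g (g u) = u)
    (hfadj : ∀ u, G.Adj u (f u)) (hgadj : ∀ u, G.Adj u (g u))
    (v : V) (hv : f v ≠ g v) :
    ∃ c : G.Walk v v, IsAltCycle G M c ∧ ∀ e ∈ c.edges, e ∈ M ∨ e ∈ N := by
  set σ : V → V := fun u => g (f u) with hσ
  have hσinj : Function.Injective σ := by
    intro a b hab
    simp only [hσ] at hab
    have h1 := congrArg g hab
    rw [hginv, hginv] at h1
    have h2 := congrArg f h1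
    rwa [hfinv, hfinv] at h2
  have hexists : ∃ n, 0 < n ∧ σ^[n] v = v := by
    have key : ∀ i j : ℕ, i < j → σ^[i] v = σ^[j] v → ∃ n, 0 < n ∧ σ^[n] v = v := by
      intro i j hlt heq
      refine ⟨j - i, by omega, ?_⟩
      have h1 : σ^[i] (σ^[j-i] v) = σ^[i] v := by
        rw [← Function.iterate_add_apply, show i + (j - i) = j by omega]
        exact heq.symm
      exact (hσinj.iterate i) h1
    obtain ⟨i, j, hij, h⟩ := Finite.exists_ne_map_eq_of_infinite (fun k : ℕ => σ^[k] v)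
    rcases lt_trichotomy i j with h' | h' | h'
    · exact key i j h' h
    · exact absurd h' hij
    · exact key j i h' h.symm
  set m := sInf {n | 0 < n ∧ σ^[n] v = v} with hm_def
  have hm_mem : 0 < m ∧ σ^[m] v = v := Nat.sInf_mem hexists
  have hm_min : ∀ k, 0 < k → σ^[k] v = v → m ≤ k := fun k hk hkv => Nat.sInf_le ⟨hk, hkv⟩
  have hm0 : 0 < m := hm_mem.1
  have hmv : σ^[m] v = v := hm_mem.2
  have hm2 : 2 ≤ m := by
    by_contra h
    have hm1 : m = 1 := by omega
    have h1 : σ^[1] v = v := by rw [← hm1]; exact hmv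
    rw [Function.iterate_one] at h1
    apply hv
    have h2 : g (f v) = v := h1
    have h3 := congrArg g h2
    rwa [hginv] at h3
  obtain ⟨r, hr⟩ : ∃ r, m = r + 1 := ⟨m - 1, by omega⟩
  have hdvd : ∀ q, σ^[m * q] v = v := by
    intro q
    induction q with
    | zero => simp
    | succ q ih =>
      rw [Nat.mul_succ, Function.iterate_add_apply, hmv, ih]
  have hmod : ∀ a, σ^[a] v = σ^[a % m] v := by
    intro a
    conv_lhs => rw [← Nat.mod_add_div a m]
    rw [Function.iterate_add_apply, hdvd]
  have hmodeq : ∀ a b, a % m = b % m → σ^[a] v = σ^[b] v := fun a b h => by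
    rw [hmod a, hmod b, h]
  have hinj2 : ∀ a b, σ^[a] v = σ^[b] v → a % m = b % m := by
    have key : ∀ r' s, r' < m → s < m → r' ≤ s → σ^[r'] v = σ^[s] v → r' = s := by
      intro r' s hr' hs hrs heq
      by_contra hne
      have h1 : σ^[s - r'] v = v := by
        have h2 : σ^[r'] (σ^[s - r'] v) = σ^[r'] v := by
          rw [← Function.iterate_add_apply, show r' + (s - r') = s by omega]
          exact heq.symm
        exact (hσinj.iterate r') h2
      have := hm_min (s - r') (by omega) h1
      omega
    intro a b h
    rw [hmod a, hmod b] at h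
    rcases le_total (a % m) (b % m) with h' | h'
    · exact key _ _ (Nat.mod_lt _ hm0) (Nat.mod_lt _ hm0) h' h
    · exact (key _ _ (Nat.mod_lt _ hm0) (Nat.mod_lt _ hm0) h' h.symm).symm
  have step1 : ∀ a b, f (σ^[a] v) = σ^[b] v → g (σ^[b] v) = σ^[a+1] v := by
    intro a b h
    rw [← h, Function.iterate_succ_apply']
  have step2 : ∀ a b, g (σ^[a] v) = σ^[b] v → f (σ^[b] v) = σ^[a + m - 1] v := by
    intro a b h
    have h1 : σ (f (σ^[b] v)) = σ^[a] v := by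
      rw [← h]
      simp only [hσ, hfinv, hginv]
    have h2 : σ (σ^[a + m - 1] v) = σ^[a] v := by
      rw [← Function.iterate_succ_apply' σ (a + m - 1) v, show (a + m - 1).succ = a + m by omega,
        Function.iterate_add_apply, hmv]
    exact hσinj (h1.trans h2.symm)
  have chain : ∀ j k, f (σ^[j] v) = σ^[k] v → ∀ t, f (σ^[j + t] v) = σ^[k + t * r] v := by
    intro j k h t
    induction t with
    | zero => simpa using h
    | succ t ih =>
      have h1 := step1 _ _ ih
      have h2 := step2 _ _ h1
      have h3 : k + t * r + m - 1 = k + (t + 1) * r := by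
        rw [hr]; ring_nf; omega
      rw [h3] at h2
      rw [show j + (t + 1) = j + t + 1 by ring]
      exact h2
  have mulmod : ∀ a : ℕ, (a * m) % m = 0 := fun a => Nat.mul_mod_left a m
  have noF : ∀ j k, f (σ^[j] v) ≠ σ^[k] v := by
    intro j k h
    set D := k + j * r + m with hD
    have harith1 : ∀ t, 2 * t % m = D % m → (j + t) % m = (k + t * r) % m := by
      intro t ht
      have hL : (j + t) + (t + j * r) = 2 * t + j * m := by rw [hr]; ring
      have hR : (k + t * r) + (t + j * r) = (k + j * r) + t * m := by rw [hr]; ring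
      have h2t : Nat.ModEq m (2 * t) (k + j * r) := by
        show 2 * t % m = (k + j * r) % m
        rw [ht, hD, Nat.add_mod_right]
      have hjm : Nat.ModEq m (j * m) (t * m) := by
        show (j * m) % m = (t * m) % m
        rw [mulmod, mulmod]
      have := (h2t.add hjm)
      have hfin : Nat.ModEq m ((j + t) + (t + j * r)) ((k + t * r) + (t + j * r)) := by
        rw [hL, hR]; exact this
      exact Nat.ModEq.add_right_cancel' _ hfin
    have harith2 : ∀ t, (2 * t + 1) % m = D % m → (k + t * r) % m = (j + t + 1) % m := by
      intro t ht
      have hL : (k + t * r) + (t + j * r) = (k + j * r) + t * m := by rw [hr]; ring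
      have hR : (j + t + 1) + (t + j * r) = (2 * t + 1) + j * m := by rw [hr]; ring
      have h2t : Nat.ModEq m (k + j * r) (2 * t + 1) := by
        show (k + j * r) % m = (2 * t + 1) % m
        rw [ht, hD, Nat.add_mod_right]
      have hjm : Nat.ModEq m (t * m) (j * m) := by
        show (t * m) % m = (j * m) % m
        rw [mulmod, mulmod]
      have := (h2t.add hjm)
      have hfin : Nat.ModEq m ((k + t * r) + (t + j * r)) ((j + t + 1) + (t + j * r)) := by
        rw [hL, hR]; exact this
      exact Nat.ModEq.add_right_cancel' _ hfin
    have hsol : (∃ t, 2 * t % m = D % m) ∨ (∃ t, (2 * t + 1) % m = D % m) := by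
      rcases Nat.even_or_odd D with ⟨a, ha⟩ | ⟨a, ha⟩
      · left; exact ⟨a, by rw [ha]; ring_nf⟩
      · rcases Nat.even_or_odd m with hm' | hm'
        · right; exact ⟨a, by rw [ha]⟩
        · left
          obtain ⟨b, hb⟩ := hm'
          refine ⟨D * (b + 1), ?_⟩
          have h1 : 2 * (D * (b + 1)) = m * D + D := by rw [hb]; ring
          rw [h1, Nat.mul_add_mod]
    rcases hsol with ⟨t, ht⟩ | ⟨t, ht⟩
    · have hx := chain j k h t
      have heq : σ^[j + t] v = σ^[k + t * r] v := hmodeq _ _ (harith1 t ht)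
      rw [← heq] at hx
      exact hfne _ hx
    · have hx := step1 _ _ (chain j k h t)
      have heq : σ^[k + t * r] v = σ^[j + t + 1] v := hmodeq _ _ (harith2 t ht)
      rw [← heq] at hx
      exact hgne _ hx
  -- the vertex sequence
  set y : ℕ → V := fun n => if n % 2 = 0 then σ^[n / 2] v else f (σ^[n / 2] v) with hy
  have hy_even : ∀ a, y (2 * a) = σ^[a] v := by
    intro a
    simp only [hy]
    rw [if_pos (by omega), show 2 * a / 2 = a by omega]
  have hy_odd : ∀ a, y (2 * a + 1) = f (σ^[a] v) := by
    intro a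
    simp only [hy]
    rw [if_neg (by omega), show (2 * a + 1) / 2 = a by omega]
  have hy_per : ∀ n, y (n + 2 * m) = y n := by
    intro n
    have hpar : (n + 2 * m) % 2 = n % 2 := by omega
    have hdiv : (n + 2 * m) / 2 = n / 2 + m := by omega
    have hit : σ^[(n + 2 * m) / 2] v = σ^[n / 2] v := by
      rw [hdiv, Function.iterate_add_apply, hmv]
    simp only [hy, hpar, hit]
  have hy_mod : ∀ n, y n = y (n % (2 * m)) := by
    have key : ∀ q n, y (n + 2 * m * q) = y n := by
      intro q
      induction q with
      | zero => simp
      | succ q ih =>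
        intro n
        rw [Nat.mul_succ, ← Nat.add_assoc, hy_per, ih]
    intro n
    conv_lhs => rw [← Nat.mod_add_div n (2 * m)]
    exact key (n / (2 * m)) (n % (2 * m))
  have hy_inj_lt : ∀ a b, a < 2 * m → b < 2 * m → y a = y b → a = b := by
    intro a b ha hb hab
    obtain ⟨a', ha'⟩ : ∃ a', a = 2 * a' ∨ a = 2 * a' + 1 := ⟨a / 2, by omega⟩
    obtain ⟨b', hb'⟩ : ∃ b', b = 2 * b' ∨ b = 2 * b' + 1 := ⟨b / 2, by omega⟩
    rcases ha' with rfl | rfl <;> rcases hb' with rfl | rfl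
    · rw [hy_even, hy_even] at hab
      have h1 := hinj2 _ _ hab
      rw [Nat.mod_eq_of_lt (by omega), Nat.mod_eq_of_lt (by omega)] at h1
      omega
    · rw [hy_even, hy_odd] at hab
      exact absurd hab.symm (noF _ _)
    · rw [hy_odd, hy_even] at hab
      exact absurd hab (noF _ _)
    · rw [hy_odd, hy_odd] at hab
      have h0 : σ^[a'] v = σ^[b'] v := by
        have h1 := congrArg f hab
        rwa [hfinv, hfinv] at h1
      have h1 := hinj2 _ _ h0
      rw [Nat.mod_eq_of_lt (by omega), Nat.mod_eq_of_lt (by omega)] at h1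
      omega
  have hy_inj : ∀ a b, y a = y b → a % (2 * m) = b % (2 * m) := by
    intro a b h
    rw [hy_mod a, hy_mod b] at h
    exact hy_inj_lt _ _ (Nat.mod_lt _ (by omega)) (Nat.mod_lt _ (by omega)) h
  have hadj : ∀ i, G.Adj (y i) (y (i + 1)) := by
    intro i
    obtain ⟨a, hi⟩ : ∃ a, i = 2 * a ∨ i = 2 * a + 1 := ⟨i / 2, by omega⟩
    rcases hi with rfl | rfl
    · rw [hy_even, hy_odd]
      exact hfadj _
    · rw [hy_odd, show 2 * a + 1 + 1 = 2 * (a + 1) by ring, hy_even,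
        Function.iterate_succ_apply']
      exact hgadj _
  have hedge_even : ∀ a, s(y (2 * a), y (2 * a + 1)) ∈ M := by
    intro a
    rw [hy_even, hy_odd]
    exact hf1 _
  have hedge_odd_N : ∀ a, s(y (2 * a + 1), y (2 * a + 1 + 1)) ∈ N := by
    intro a
    rw [hy_odd, show 2 * a + 1 + 1 = 2 * (a + 1) by ring, hy_even,
      Function.iterate_succ_apply']
    exact hg1 _
  have hedge_odd_notM : ∀ a, s(y (2 * a + 1), y (2 * a + 1 + 1)) ∉ M := by
    intro a hmem
    rw [hy_odd, show 2 * a + 1 + 1 = 2 * (a + 1) by ring, hy_even] at hmem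
    have h1 := hf4 _ hmem (f (σ^[a] v)) (Sym2.mem_mk_left _ _)
    rw [hfinv] at h1
    have h2 : σ^[a + 1] v = σ^[a] v := Sym2.congr_right.mp h1
    have h3 := hinj2 _ _ h2
    have h4 : Nat.ModEq m a (a + 1) := h3.symm
    have h5 := (Nat.modEq_iff_dvd' (by omega)).mp h4
    have := Nat.le_of_dvd (by omega) h5
    omega
  -- build the walk
  have hadj' : ∀ i < 2 * m, G.Adj (y i) (y (i + 1)) := fun i _ => hadj i
  have hy0 : y 0 = v := by
    have := hy_even 0
    simpa using this
  have hyend : y (2 * m) = v := by rw [hy_even m, hmv]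
  set c : G.Walk v v := (walkFn G y (2 * m) hadj').copy hy0 hyend with hc
  have hcedges : c.edges = (List.range (2 * m)).map (fun i => s(y i, y (i + 1))) := by
    rw [hc, SimpleGraph.Walk.edges_copy, walkFn_edges]
  have hcsupport : c.support = (List.range (2 * m + 1)).map y := by
    rw [hc, SimpleGraph.Walk.support_copy, walkFn_support]
  have hclength : c.length = 2 * m := by
    rw [hc, SimpleGraph.Walk.length_copy, walkFn_length]
  -- modular case helper
  have hmodcase : ∀ i, i < 2 * m → (i + 1) % (2 * m) = if i + 1 = 2 * m then 0 else i + 1 := by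
    intro i hi
    split
    · rename_i h'; rw [h', Nat.mod_self]
    · rename_i h'; exact Nat.mod_eq_of_lt (by omega)
  have hCycle : c.IsCycle := by
    rw [SimpleGraph.Walk.isCycle_def]
    refine ⟨?_, ?_, ?_⟩
    · rw [SimpleGraph.Walk.isTrail_def, hcedges]
      refine List.Nodup.map_on ?_ List.nodup_range
      intro i hi j hj hij
      rw [List.mem_range] at hi hj
      rw [Sym2.eq, Sym2.rel_iff', Prod.mk.injEq, Prod.swap_prod_mk, Prod.mk.injEq] at hij
      rcases hij with ⟨h1, _⟩ | ⟨h1, h2⟩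
      · have h3 := hy_inj _ _ h1
        rw [Nat.mod_eq_of_lt hi, Nat.mod_eq_of_lt hj] at h3
        exact h3
      · exfalso
        have e1 := hy_inj _ _ h1
        have e2 := hy_inj _ _ h2
        rw [Nat.mod_eq_of_lt hi, hmodcase j hj] at e1
        rw [hmodcase i hi, Nat.mod_eq_of_lt hj] at e2
        revert e1 e2
        split <;> split <;> omega
    · intro hnil
      have := hclength
      rw [hnil] at this
      simp at this
      omega
    · have htail : c.support.tail = (List.range (2 * m)).map (fun i => y (i + 1)) := by
        rw [hcsupport, List.range_succ_eq_map]
        simp [List.map_map, Function.comp_def]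
      rw [htail]
      refine List.Nodup.map_on ?_ List.nodup_range
      intro i hi j hj hij
      rw [List.mem_range] at hi hj
      have h1 := hy_inj _ _ hij
      rw [hmodcase i hi, hmodcase j hj] at h1
      revert h1
      split <;> split <;> omega
  -- alternation
  have hAlt : ∀ w ∈ c.support, ∃! e, e ∈ c.edges ∧ e ∈ M ∧ w ∈ e := by
    intro w hw
    rw [hcsupport, List.mem_map] at hw
    obtain ⟨n, hn, rfl⟩ := hw
    rw [List.mem_range] at hn
    have h2m0 : 0 < 2 * m := by omega
    have hincid : ∀ i, i < 2 * m → y n ∈ s(y i, y (i + 1)) →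
        i = n % (2 * m) ∨ (i + 1) % (2 * m) = n % (2 * m) := by
      intro i hi hmem
      rcases Sym2.mem_iff.mp hmem with h | h
      · left
        have := hy_inj _ _ h.symm
        rwa [Nat.mod_eq_of_lt hi] at this
      · right
        exact hy_inj _ _ h.symm
    have hyn : y n = y (n % (2 * m)) := hy_mod n
    have hn'lt : n % (2 * m) < 2 * m := Nat.mod_lt _ h2m0
    have hieven : ∀ i, i < 2 * m → s(y i, y (i + 1)) ∈ M → i % 2 = 0 := by
      intro i hi hiM
      by_contra hodd
      obtain ⟨b, hb⟩ : ∃ b, i = 2 * b + 1 := ⟨i / 2, by omega⟩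
      rw [hb] at hiM
      exact hedge_odd_notM b hiM
    rcases Nat.even_or_odd (n % (2 * m)) with ⟨a, ha⟩ | ⟨a, ha⟩
    · -- n % 2m = a + a, even: M-edge is at index n % 2m
      refine ⟨s(y (2 * a), y (2 * a + 1)), ⟨?_, ?_, ?_⟩, ?_⟩
      · rw [hcedges, List.mem_map]
        exact ⟨2 * a, List.mem_range.mpr (by omega), rfl⟩
      · exact hedge_even a
      · rw [hyn, show n % (2 * m) = 2 * a by omega]
        exact Sym2.mem_mk_left _ _
      · rintro e ⟨hec, heM, hye⟩
        rw [hcedges, List.mem_map] at hec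
        obtain ⟨i, hi, rfl⟩ := hec
        rw [List.mem_range] at hi
        have hie := hieven i hi heM
        rcases hincid i hi hye with h | h
        · rw [show n % (2 * m) = 2 * a by omega] at h
          rw [h]
        · exfalso
          rw [hmodcase i hi] at h
          revert h
          split <;> omega
    · -- n % 2m = 2a+1, odd: M-edge is at index n%2m - 1 = 2a
      refine ⟨s(y (2 * a), y (2 * a + 1)), ⟨?_, ?_, ?_⟩, ?_⟩
      · rw [hcedges, List.mem_map]
        exact ⟨2 * a, List.mem_range.mpr (by omega), rfl⟩
      · exact hedge_even a
      · rw [hyn, show n % (2 * m) = 2 * a + 1 by omega]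
        exact Sym2.mem_mk_right _ _
      · rintro e ⟨hec, heM, hye⟩
        rw [hcedges, List.mem_map] at hec
        obtain ⟨i, hi, rfl⟩ := hec
        rw [List.mem_range] at hi
        have hie := hieven i hi heM
        rcases hincid i hi hye with h | h
        · exfalso; omega
        · rw [hmodcase i hi] at h
          have : i = 2 * a := by
            revert h; split <;> omega
          rw [this]
  refine ⟨c, ⟨hCycle, hAlt⟩, ?_⟩
  intro e he
  rw [hcedges, List.mem_map] at he
  obtain ⟨i, hi, rfl⟩ := he
  obtain ⟨a, hia⟩ : ∃ a, i = 2 * a ∨ i = 2 * a + 1 := ⟨i / 2, by omega⟩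
  rcases hia with rfl | rfl
  · left; exact hedge_even a
  · right; exact hedge_odd_N a


lemma forward_dir {G : SimpleGraph V} {M S : Set (Sym2 V)}
    (hM : IsPM G M) (hS : S ⊆ G.edgeSet \ M) (hAF : IsAntiForcingSet G M S)
    {v : V} (c : G.Walk v v) (hc : IsAltCycle G M c) : ∃ e ∈ S, e ∈ c.edges := by
  by_contra h
  push_neg at h
  obtain ⟨hcyc, halt⟩ := hc
  have hMsub : M ⊆ (G.deleteEdges S).edgeSet := by
    intro e he
    rw [SimpleGraph.edgeSet_deleteEdges]
    exact ⟨hM.1 he, fun hs => (hS hs).2 he⟩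
  have hMpm : IsPM (G.deleteEdges S) M := ⟨hMsub, hM.2⟩
  have hcsub : ∀ e ∈ c.edges, e ∈ (G.deleteEdges S).edgeSet := by
    intro e he
    rw [SimpleGraph.edgeSet_deleteEdges]
    exact ⟨c.edges_subset_edgeSet he, fun hs => h e hs he⟩
  set M' := (M \ {e | e ∈ c.edges}) ∪ ({e | e ∈ c.edges} \ M) with hM'def
  have hmemM' : ∀ e, e ∈ M' ↔ (e ∈ M ∧ e ∉ c.edges) ∨ (e ∈ c.edges ∧ e ∉ M) := by
    intro e
    simp [hM'def, Set.mem_union, Set.mem_diff, Set.mem_setOf_eq]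
  have hother : ∀ u ∈ c.support, ∃ ε, ε ∈ c.edges ∧ u ∈ ε ∧ ε ∉ M ∧
      ∀ e ∈ c.edges, u ∈ e → e ∉ M → e = ε := by
    intro u hu
    obtain ⟨e₀, ⟨he₀c, he₀M, hue₀⟩, h0u⟩ := halt u hu
    obtain ⟨e₁, e₂, hne, h1c, h2c, hw1, hw2, htwo⟩ := cycle_two_edges hcyc hu
    rcases htwo e₀ he₀c hue₀ with rfl | rfl
    · refine ⟨e₂, h2c, hw2, ?_, ?_⟩
      · intro hM2; exact hne (h0u e₂ ⟨h2c, hM2, hw2⟩).symm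
      · intro e hec hue heM
        rcases htwo e hec hue with rfl | rfl
        · exact absurd he₀M heM
        · rfl
    · refine ⟨e₁, h1c, hw1, ?_, ?_⟩
      · intro hM1; exact hne (h0u e₁ ⟨h1c, hM1, hw1⟩)
      · intro e hec hue heM
        rcases htwo e hec hue with rfl | rfl
        · rfl
        · exact absurd he₀M heM
  have hM'pm : IsPM (G.deleteEdges S) M' := by
    constructor
    · intro e he
      rcases (hmemM' e).mp he with ⟨heM, _⟩ | ⟨hec, _⟩
      · exact hMsub heM
      · exact hcsub e hec
    · intro u
      by_cases hu : u ∈ c.support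
      · obtain ⟨ε, hεc, huε, hεM, hεuniq⟩ := hother u hu
        refine ⟨ε, ⟨(hmemM' ε).mpr (Or.inr ⟨hεc, hεM⟩), huε⟩, ?_⟩
        rintro e ⟨he, hue⟩
        rcases (hmemM' e).mp he with ⟨heM, hec⟩ | ⟨hec, heM⟩
        · exfalso
          obtain ⟨e₀, ⟨he₀c, he₀M, hue₀⟩, _⟩ := halt u hu
          obtain ⟨e', ⟨he'M, hue'⟩, hu'⟩ := hM.2 u
          have h1 : e = e' := hu' e ⟨heM, hue⟩
          have h2 : e₀ = e' := hu' e₀ ⟨he₀M, hue₀⟩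
          exact hec (by rw [h1, ← h2]; exact he₀c)
        · exact hεuniq e hec hue heM
      · obtain ⟨e', ⟨he'M, hue'⟩, hu'⟩ := hM.2 u
        have he'nc : e' ∉ c.edges := fun hc' => hu (mem_support_of_mem_edges' hc' hue')
        refine ⟨e', ⟨(hmemM' e').mpr (Or.inl ⟨he'M, he'nc⟩), hue'⟩, ?_⟩
        rintro e ⟨he, hue⟩
        rcases (hmemM' e).mp he with ⟨heM, _⟩ | ⟨hec, _⟩
        · exact hu' e ⟨heM, hue⟩
        · exact absurd (mem_support_of_mem_edges' hec hue) hu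
  have hvs : v ∈ c.support := SimpleGraph.Walk.start_mem_support c
  obtain ⟨ε, hεc, hvε, hεM, _⟩ := hother v hvs
  have hεM' : ε ∈ M' := (hmemM' ε).mpr (Or.inr ⟨hεc, hεM⟩)
  obtain ⟨Q, _, hQuniq⟩ := hAF.2
  have h1 := hQuniq M hMpm
  have h2 := hQuniq M' hM'pm
  have h3 : M' = M := h2.trans h1.symm
  rw [h3] at hεM'
  exact hεM hεM'

theorem stmt1 [Fintype V] (G : SimpleGraph V) (M S : Set (Sym2 V))
    (hM : IsPM G M) (hS : S ⊆ G.edgeSet \ M) :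
    IsAntiForcingSet G M S ↔
      ∀ (v : V) (c : G.Walk v v), IsAltCycle G M c → ∃ e ∈ S, e ∈ c.edges := by
  constructor
  · intro hAF v c hc
    exact forward_dir hM hS hAF c hc
  · intro hcyc
    refine ⟨hS, ?_⟩
    have hMsub : M ⊆ (G.deleteEdges S).edgeSet := by
      intro e he
      rw [SimpleGraph.edgeSet_deleteEdges]
      exact ⟨hM.1 he, fun hs => (hS hs).2 he⟩
    have hMpm : IsPM (G.deleteEdges S) M := ⟨hMsub, hM.2⟩
    refine ⟨M, hMpm, ?_⟩
    intro Q hQ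
    by_contra hne
    obtain ⟨f, hf1, hfne, hfinv, hf4⟩ := exists_partner hM
    obtain ⟨g, hg1, hgne, hginv, hg4⟩ := exists_partner hQ
    have hQsub : ∀ e ∈ Q, e ∈ G.edgeSet ∧ e ∉ S := by
      intro e he
      have h1 := hQ.1 he
      rw [SimpleGraph.edgeSet_deleteEdges] at h1
      exact h1
    have hfg : ∃ u, f u ≠ g u := by
      by_contra hfg
      push_neg at hfg
      apply hne
      ext e
      constructor
      · intro he
        induction e with
        | _ a b =>
          have h1 := hg4 _ he a (Sym2.mem_mk_left a b)
          rw [h1, ← hfg a]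
          exact hf1 a
      · intro he
        induction e with
        | _ a b =>
          have h1 := hf4 _ he a (Sym2.mem_mk_left a b)
          rw [h1, hfg a]
          exact hg1 a
    obtain ⟨u, hu⟩ := hfg
    have hfadj : ∀ w, G.Adj w (f w) := fun w => G.mem_edgeSet.mp (hM.1 (hf1 w))
    have hgadj : ∀ w, G.Adj w (g w) := fun w => G.mem_edgeSet.mp (hQsub _ (hg1 w)).1
    obtain ⟨c, hcalt, hcMQ⟩ :=
      alt_cycle_of_two_matchings f g hf1 hfne hfinv hf4 hg1 hgne hginv hfadj hgadj u hu
    obtain ⟨e, heS, hec⟩ := hcyc u c hcalt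
    rcases hcMQ e hec with heM | heQ
    · exact (hS heS).2 heM
    · exact (hQsub e heQ).2 heS
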